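/- For all positive integers k and m, every finite simple graph G contains a set T of vertices with |T| ≤ k·m such that at least one of the following holds: (i) the induced subgraph of G on V(G)\T is either k-connected or complete; (ii) every connected component of the induced subgraph of G on V(G)\T has at most |V(G)\T| - m vertices. -/

import Mathlib

/-- A graph is `k`-connected if it remains connected after the removal of any fewer
than `k` vertices. -/
def KConnected {V : Type*} (k : ℕ) (G : SimpleGraph V) : Prop :=
  ∀ S : Set V, S.ncard < k → (G.induce (Sᶜ)).Connected

namespace Statement11Aux

open SimpleGraph Set

variable {V : Type*}

lemma reach_of_mem_support {G : SimpleGraph V} {x y z : V} (w : G.Walk x y)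
    (hz : z ∈ w.support) : G.Reachable x z := by
  induction w with
  | nil =>
    rw [Walk.support_nil, List.mem_singleton] at hz
    exact hz ▸ Reachable.refl _
  | cons h p ih =>
    rw [Walk.support_cons, List.mem_cons] at hz
    rcases hz with rfl | hz
    · exact Reachable.refl _
    · exact (h.reachable).trans (ih hz)

lemma walk_transfer {G : SimpleGraph V} {A B : Set V} {x y : ↥A}
    (w : (G.induce A).Walk x y) :
    ∀ (hsup : ∀ z ∈ w.support, (z : V) ∈ B),
      (G.induce B).Reachable ⟨x, hsup x w.start_mem_support⟩ ⟨y, hsup y w.end_mem_support⟩ := by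
  induction w with
  | nil =>
    intro hsup
    exact Reachable.refl _
  | @cons u v w h p ih =>
    intro hsup
    have hu : (u : V) ∈ B := hsup u (Walk.start_mem_support _)
    have hv : (v : V) ∈ B := hsup v (by
      rw [Walk.support_cons]; exact List.mem_cons_of_mem _ p.start_mem_support)
    have hadj : (G.induce B).Adj ⟨u, hu⟩ ⟨v, hv⟩ := h
    exact hadj.reachable.trans (ih fun z hz => hsup z (by
      rw [Walk.support_cons]; exact List.mem_cons_of_mem _ hz))

lemma reach_mono {G : SimpleGraph V} {A B : Set V} (hAB : A ⊆ B) {x y : ↥A}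
    (h : (G.induce A).Reachable x y) :
    (G.induce B).Reachable ⟨x, hAB x.2⟩ ⟨y, hAB y.2⟩ := by
  obtain ⟨w⟩ := h
  exact walk_transfer w fun z _ => hAB z.2

noncomputable def induceInduceIso (G : SimpleGraph V) (A : Set V) (B : Set ↥A) :
    ((G.induce A).induce B) ≃g G.induce (Subtype.val '' B) where
  toEquiv := Equiv.Set.image Subtype.val B Subtype.val_injective
  map_rel_iff' := Iff.rfl

lemma core [Fintype V] (k₀ m₀ : ℕ) (G : SimpleGraph V) :
    ∀ N (U : Set V) (s : ℕ) (W : Set V), U.ncard ≤ N → W ⊆ U → s + 1 ≤ W.ncard →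
      (∀ u v : ↥U, (u : V) ∈ W → (v : V) ∈ W → u ≠ v → ¬ (G.induce U).Reachable u v) →
      Uᶜ.ncard ≤ k₀ * s → s ≤ m₀ + 1 →
      ∃ A : Set V, Aᶜ.ncard ≤ (k₀ + 1) * (m₀ + 1) ∧
        ((KConnected (k₀ + 1) (G.induce A) ∨
            ∀ x y : ↥A, x ≠ y → (G.induce A).Adj x y) ∨
          ∀ comp : (G.induce A).ConnectedComponent,
            comp.supp.ncard + (m₀ + 1) ≤ A.ncard) := by
  intro N
  induction N with
  | zero =>
    intro U s W hUN hWU hW hsep hT hs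
    exfalso
    have : W.ncard ≤ U.ncard := Set.ncard_le_ncard hWU U.toFinite
    omega
  | succ N ih =>
    intro U s W hUN hWU hW hsep hT hs
    classical
    have hWne : W.Nonempty := Set.nonempty_of_ncard_ne_zero (by omega)
    obtain ⟨w0, hw0⟩ := hWne
    haveI : Nonempty (G.induce U).ConnectedComponent :=
      ⟨(G.induce U).connectedComponentMk ⟨w0, hWU hw0⟩⟩
    obtain ⟨D, hD⟩ := Finite.exists_max (fun c : (G.induce U).ConnectedComponent => c.supp.ncard)
    by_cases hP : ∀ c : (G.induce U).ConnectedComponent, c.supp.ncard + (m₀ + 1) ≤ U.ncard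
    · refine ⟨U, ?_, Or.inr hP⟩
      calc Uᶜ.ncard ≤ k₀ * s := hT
        _ ≤ k₀ * (m₀ + 1) := Nat.mul_le_mul_left _ hs
        _ ≤ (k₀ + 1) * (m₀ + 1) := Nat.mul_le_mul_right _ (by omega)
    · push_neg at hP
      obtain ⟨c₀, hc₀⟩ := hP
      have hjm : U.ncard < D.supp.ncard + (m₀ + 1) := lt_of_lt_of_le hc₀ (by
        have := hD c₀; omega)
      set Dv : Set V := Subtype.val '' D.supp with hDvdef
      have hDvU : Dv ⊆ U := by rintro z ⟨x, hx, rfl⟩; exact x.2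
      have hDvcard : Dv.ncard = D.supp.ncard :=
        Set.ncard_image_of_injective _ Subtype.val_injective
      have hmemDv : ∀ z : ↥U, (z : V) ∈ Dv ↔ (G.induce U).connectedComponentMk z = D := by
        intro z
        constructor
        · rintro ⟨x, hx, hxz⟩
          have hxe : x = z := Subtype.ext hxz
          subst hxe
          exact (ConnectedComponent.mem_supp_iff _ _).mp hx
        · intro h
          exact ⟨z, (ConnectedComponent.mem_supp_iff _ _).mpr h, rfl⟩
      have hWDv : (W ∩ Dv).ncard ≤ 1 := by
        by_contra hcon
        push_neg at hcon
        obtain ⟨a, b, ha, hb, hab⟩ := (Set.one_lt_ncard_iff (W ∩ Dv).toFinite).mp hcon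
        have hra : (G.induce U).connectedComponentMk ⟨a, hWU ha.1⟩ = D :=
          (hmemDv ⟨a, hWU ha.1⟩).mp ha.2
        have hrb : (G.induce U).connectedComponentMk ⟨b, hWU hb.1⟩ = D :=
          (hmemDv ⟨b, hWU hb.1⟩).mp hb.2
        have hreach : (G.induce U).Reachable ⟨a, hWU ha.1⟩ ⟨b, hWU hb.1⟩ :=
          (SimpleGraph.ConnectedComponent.eq).mp (hra.trans hrb.symm)
        exact hsep _ _ ha.1 hb.1 (fun he => hab (congrArg Subtype.val he)) hreach
      have hWD : s ≤ (W \ Dv).ncard := by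
        have h1 := Set.ncard_inter_add_ncard_diff_eq_ncard W Dv W.toFinite
        omega
      have hsU : s + Dv.ncard ≤ U.ncard := by
        have h2 : (W \ Dv) ⊆ U \ Dv := Set.diff_subset_diff_left hWU
        have h3 : (U \ Dv).ncard = U.ncard - Dv.ncard := Set.ncard_diff hDvU
        have h4 : Dv.ncard ≤ U.ncard := Set.ncard_le_ncard hDvU U.toFinite
        have h5 := Set.ncard_le_ncard h2 (U \ Dv).toFinite
        omega
      have hsm : s ≤ m₀ := by omega
      have hUDv : U.ncard ≤ Dv.ncard + m₀ := by omega
      have htrapU : ∀ p q : ↥U, (p : V) ∈ Dv → (G.induce U).Reachable p q →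
          (q : V) ∈ Dv := by
        intro p q hp hr
        have h1 : (G.induce U).connectedComponentMk p = D := (hmemDv p).mp hp
        have h2 : (G.induce U).connectedComponentMk q = D := by
          rw [(SimpleGraph.ConnectedComponent.eq).mpr hr.symm]
          exact h1
        exact (hmemDv q).mpr h2
      by_cases hgood : KConnected (k₀ + 1) (G.induce Dv) ∨
          ∀ x y : ↥Dv, x ≠ y → (G.induce Dv).Adj x y
      · refine ⟨Dv, ?_, Or.inl hgood⟩
        have h5 : Dvᶜ ⊆ Uᶜ ∪ (U \ Dv) := by
          intro z hz
          by_cases hzU : z ∈ U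
          · exact Or.inr ⟨hzU, hz⟩
          · exact Or.inl hzU
        have h6 : (U \ Dv).ncard = U.ncard - Dv.ncard := Set.ncard_diff hDvU
        have h7 : Dv.ncard ≤ U.ncard := Set.ncard_le_ncard hDvU U.toFinite
        calc Dvᶜ.ncard ≤ (Uᶜ ∪ (U \ Dv)).ncard :=
              Set.ncard_le_ncard h5 (Uᶜ ∪ (U \ Dv)).toFinite
          _ ≤ Uᶜ.ncard + (U \ Dv).ncard := Set.ncard_union_le _ _
          _ ≤ k₀ * s + m₀ := by omega
          _ ≤ (k₀ + 1) * (m₀ + 1) := by nlinarith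
      · have hnk : ¬ KConnected (k₀ + 1) (G.induce Dv) := fun h => hgood (Or.inl h)
        unfold KConnected at hnk
        push_neg at hnk
        obtain ⟨S₀, hS₀k, hS₀nc⟩ := hnk
        set Sv : Set V := Subtype.val '' S₀ with hSvdef
        have hSvD : Sv ⊆ Dv := by rintro z ⟨x, hx, rfl⟩; exact x.2
        have hSvcard : Sv.ncard = S₀.ncard :=
          Set.ncard_image_of_injective _ Subtype.val_injective
        have himg : Subtype.val '' (S₀ᶜ) = Dv \ Sv := by
          ext z
          constructor
          · rintro ⟨x, hx, rfl⟩
            refine ⟨x.2, ?_⟩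
            rintro ⟨y, hy, hyx⟩
            exact hx (by rwa [Subtype.val_injective hyx] at hy)
          · rintro ⟨hzD, hzS⟩
            exact ⟨⟨z, hzD⟩, fun hmem => hzS ⟨⟨z, hzD⟩, hmem, rfl⟩, rfl⟩
        have hnc : ¬ (G.induce (Dv \ Sv)).Connected := by
          rw [← himg]
          intro hconn
          apply hS₀nc
          exact hconn.map (induceInduceIso G Dv (S₀ᶜ)).symm.toEmbedding.toHom
            (fun y => ⟨(induceInduceIso G Dv (S₀ᶜ)) y, by exact (induceInduceIso G Dv (S₀ᶜ)).symm_apply_apply y⟩)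
        rcases Set.eq_empty_or_nonempty (Dv \ Sv) with hDe | hDne
        · -- the big component is tiny: delete everything
          have hDS : Dv ⊆ Sv := by
            intro z hz
            by_contra hzs
            have hmem : z ∈ Dv \ Sv := ⟨hz, hzs⟩
            rw [hDe] at hmem
            simp at hmem
          have hDsmall : Dv.ncard ≤ k₀ := by
            have := Set.ncard_le_ncard hDS Sv.toFinite
            omega
          refine ⟨∅, ?_, Or.inl (Or.inr (fun x y _ => absurd x.2 (Set.notMem_empty _)))⟩
          have hcard : U.ncard + Uᶜ.ncard = Nat.card V := Set.ncard_add_ncard_compl U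
          have hue : (∅ : Set V)ᶜ.ncard = Nat.card V := by
            rw [Set.compl_empty, Set.ncard_univ]
          rw [hue]
          nlinarith
        · haveI : Nonempty ↥(Dv \ Sv) := hDne.to_subtype
          have hpre : ∃ a b : ↥(Dv \ Sv), ¬ (G.induce (Dv \ Sv)).Reachable a b := by
            by_contra hcon
            push_neg at hcon
            exact hnc ⟨fun u v => hcon u v⟩
          obtain ⟨a, b, hab⟩ := hpre
          have habv : (a : V) ≠ (b : V) := by
            intro h
            exact hab ((Subtype.ext h : a = b) ▸ Reachable.refl a)
          rcases Set.eq_empty_or_nonempty Sv with hSe | hSvne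
          · -- Sv empty: contradiction, a and b lie in the same component
            exfalso
            have haD : (a : V) ∈ Dv := a.2.1
            have hbD : (b : V) ∈ Dv := b.2.1
            have hr : (G.induce U).Reachable ⟨a, hDvU haD⟩ ⟨b, hDvU hbD⟩ :=
              (SimpleGraph.ConnectedComponent.eq).mp
                (((hmemDv ⟨a, hDvU haD⟩).mp haD).trans ((hmemDv ⟨b, hDvU hbD⟩).mp hbD).symm)
            obtain ⟨wk⟩ := hr
            have hsupp : ∀ z ∈ wk.support, (z : V) ∈ Dv \ Sv := by
              intro z hz
              refine ⟨htrapU _ z haD (reach_of_mem_support wk hz), ?_⟩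
              rw [hSe]
              exact Set.notMem_empty _
            exact hab (walk_transfer wk hsupp)
          · -- recurse on U' = U \ Sv
            have hSvU : Sv ⊆ U := fun z hz => hDvU (hSvD hz)
            have hSvpos : 1 ≤ Sv.ncard := (Set.ncard_pos Sv.toFinite).mpr hSvne
            have hU'N : (U \ Sv).ncard ≤ N := by
              have h1 : (U \ Sv).ncard = U.ncard - Sv.ncard := Set.ncard_diff hSvU
              omega
            have haU' : (a : V) ∈ U \ Sv := ⟨hDvU a.2.1, a.2.2⟩
            have hbU' : (b : V) ∈ U \ Sv := ⟨hDvU b.2.1, b.2.2⟩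
            have hWDsub : W \ Dv ⊆ U \ Sv := fun z hz =>
              ⟨hWU hz.1, fun hzS => hz.2 (hSvD hzS)⟩
            have hW'U' : insert (a : V) (insert (b : V) (W \ Dv)) ⊆ U \ Sv := by
              intro z hz
              simp only [Set.mem_insert_iff] at hz
              rcases hz with rfl | rfl | hz
              · exact haU'
              · exact hbU'
              · exact hWDsub hz
            have haW : (a : V) ∉ insert (b : V) (W \ Dv) := by
              simp only [Set.mem_insert_iff]
              rintro (h | h)
              · exact habv h
              · exact h.2 a.2.1
            have hbW : (b : V) ∉ W \ Dv := fun h => h.2 b.2.1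
            have hW'card : (s + 1) + 1 ≤ (insert (a : V) (insert (b : V) (W \ Dv))).ncard := by
              rw [Set.ncard_insert_of_notMem haW, Set.ncard_insert_of_notMem hbW]
              omega
            have hcompl : (U \ Sv)ᶜ = Uᶜ ∪ Sv := by
              ext z
              simp only [Set.mem_compl_iff, Set.mem_diff, Set.mem_union]
              tauto
            have hSk : Sv.ncard ≤ k₀ := by omega
            have hT' : (U \ Sv)ᶜ.ncard ≤ k₀ * (s + 1) := by
              rw [hcompl]
              calc (Uᶜ ∪ Sv).ncard ≤ Uᶜ.ncard + Sv.ncard := Set.ncard_union_le _ _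
                _ ≤ k₀ * s + k₀ := by omega
                _ = k₀ * (s + 1) := by ring
            have hU'U : U \ Sv ⊆ U := Set.diff_subset
            have htrap : ∀ p q : ↥(U \ Sv), (p : V) ∈ Dv →
                (G.induce (U \ Sv)).Reachable p q → (q : V) ∈ Dv \ Sv := by
              intro p q hp hr
              exact ⟨htrapU ⟨p, hU'U p.2⟩ ⟨q, hU'U q.2⟩ hp (reach_mono hU'U hr), q.2.2⟩
            have hsep' : ∀ u v : ↥(U \ Sv), (u : V) ∈ insert (a : V) (insert (b : V) (W \ Dv)) →
                (v : V) ∈ insert (a : V) (insert (b : V) (W \ Dv)) → u ≠ v →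
                ¬ (G.induce (U \ Sv)).Reachable u v := by
              intro u v hu hv huv hr
              have huvv : (u : V) ≠ (v : V) := fun h => huv (Subtype.ext h)
              simp only [Set.mem_insert_iff] at hu hv
              rcases hu with hu | hu | hu <;> rcases hv with hv | hv | hv
              · exact huvv (hu.trans hv.symm)
              · -- u = a, v = b
                obtain ⟨wk⟩ := hr
                have hsupp : ∀ z ∈ wk.support, (z : V) ∈ Dv \ Sv := fun z hz =>
                  htrap u z (by rw [hu]; exact a.2.1) (reach_of_mem_support wk hz)
                have h2 := walk_transfer wk hsupp
                have ea : a = (⟨(u : V), hsupp u wk.start_mem_support⟩ : ↥(Dv \ Sv)) :=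
                  Subtype.ext hu.symm
                have eb : b = (⟨(v : V), hsupp v wk.end_mem_support⟩ : ↥(Dv \ Sv)) :=
                  Subtype.ext hv.symm
                exact hab (by rw [ea, eb]; exact h2)
              · exact hv.2 (htrap u v (by rw [hu]; exact a.2.1) hr).1
              · -- u = b, v = a
                obtain ⟨wk⟩ := hr
                have hsupp : ∀ z ∈ wk.support, (z : V) ∈ Dv \ Sv := fun z hz =>
                  htrap u z (by rw [hu]; exact b.2.1) (reach_of_mem_support wk hz)
                have h2 := walk_transfer wk hsupp
                have ea : b = (⟨(u : V), hsupp u wk.start_mem_support⟩ : ↥(Dv \ Sv)) :=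
                  Subtype.ext hu.symm
                have eb : a = (⟨(v : V), hsupp v wk.end_mem_support⟩ : ↥(Dv \ Sv)) :=
                  Subtype.ext hv.symm
                exact hab (Reachable.symm (by rw [ea, eb]; exact h2))
              · exact huvv (hu.trans hv.symm)
              · exact hv.2 (htrap u v (by rw [hu]; exact b.2.1) hr).1
              · exact hu.2 (htrap v u (by rw [hv]; exact a.2.1) hr.symm).1
              · exact hu.2 (htrap v u (by rw [hv]; exact b.2.1) hr.symm).1
              · exact hsep ⟨u, hU'U u.2⟩ ⟨v, hU'U v.2⟩ hu.1 hv.1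
                  (fun h => huvv (congrArg (fun t : ↥U => (t : V)) h)) (reach_mono hU'U hr)
            exact ih (U \ Sv) (s + 1) (insert (a : V) (insert (b : V) (W \ Dv)))
              hU'N hW'U' hW'card hsep' hT' (by omega)

end Statement11Aux

/-- For all positive integers `k` and `m`, every finite simple graph `G` has a set `T`
of vertices with `|T| ≤ k·m` such that either (i) the induced subgraph on `V(G) \ T` is
`k`-connected or complete, or (ii) every connected component of the induced subgraph on
`V(G) \ T` has at most `|V(G) \ T| - m` vertices (expressed subtraction-free). -/
theorem statement11 {V : Type*} [Fintype V] (k m : ℕ) (hk : 1 ≤ k) (hm : 1 ≤ m)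
    (G : SimpleGraph V) :
    ∃ T : Set V, T.ncard ≤ k * m ∧
      ((KConnected k (G.induce (Tᶜ)) ∨
          ∀ x y : ↥(Tᶜ), x ≠ y → (G.induce (Tᶜ)).Adj x y) ∨
        ∀ comp : (G.induce (Tᶜ)).ConnectedComponent,
          comp.supp.ncard + m ≤ (Tᶜ : Set V).ncard) := by
  classical
  obtain ⟨k₀, rfl⟩ : ∃ k₀, k = k₀ + 1 := ⟨k - 1, by omega⟩
  obtain ⟨m₀, rfl⟩ : ∃ m₀, m = m₀ + 1 := ⟨m - 1, by omega⟩
  cases isEmpty_or_nonempty V with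
  | inl h =>
    exact ⟨∅, by simp, Or.inl (Or.inr fun x y _ => isEmptyElim (x : V))⟩
  | inr h =>
    obtain ⟨v⟩ := h
    obtain ⟨A, hA1, hA2⟩ := Statement11Aux.core k₀ m₀ G (Set.univ : Set V).ncard
      Set.univ 0 {v} le_rfl (by simp) (by simp)
      (fun u w hu hw huw _ => huw (Subtype.ext (hu.trans hw.symm))) (by simp) (by omega)
    refine ⟨Aᶜ, hA1, ?_⟩
    rw [compl_compl]
    exact hA2
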